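/- Let H be a Hopf algebra over a commutative integral domain R, Π a finite group of weights, and h skew-primitive with Δ(h) = g ⊗ h + h ⊗ g'. If γ(g) = 1 for all γ ∈ Π (g' arbitrary grouplike) and there exists λ ∈ Π with λ(g') ≠ 1, then (1 - λ(g g'))·Σ_Π(h) = |Π|·λ(h), i.e. Σ_Π(h) = |Π|·λ(h)/(1 - λ(gg')). -/

import Mathlib

open TensorProduct

/-- Convolution of two `R`-linear functionals on a bialgebra. -/
noncomputable def conv {R H : Type*} [CommSemiring R] [Semiring H] [Bialgebra R H]
    (f g : H →ₗ[R] R) : H →ₗ[R] R :=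
  LinearMap.mul' R R ∘ₗ TensorProduct.map f g ∘ₗ Coalgebra.comul

section aux

variable {R H : Type*} [CommSemiring R] [Semiring H] [Bialgebra R H]

lemma conv_repr {ι : Type*} (f k : H →ₗ[R] R) (x : H) (repr : Coalgebra.Repr R x ι) :
    conv f k x = ∑ i ∈ repr.index, f (repr.left i) * k (repr.right i) := by
  simp only [conv, LinearMap.comp_apply]
  rw [← repr.eq]
  simp [map_sum]

lemma conv_counit_right (f : H →ₗ[R] R) :
    conv f (Bialgebra.counitAlgHom R H).toLinearMap = f := by
  ext x
  have key := Coalgebra.sum_map_tmul_counit_eq (R := R) f x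
    (repr := Coalgebra.Repr.arbitrary R x)
  have := congrArg (LinearMap.mul' R R) key
  simp only [map_sum, LinearMap.mul'_apply, mul_one] at this
  rw [conv_repr f _ x (Coalgebra.Repr.arbitrary R x)]
  simpa using this

lemma conv_assoc (f k m : H →ₗ[R] R) :
    conv (conv f k) m = conv f (conv k m) := by
  ext x
  set repr := Coalgebra.Repr.arbitrary R x with hrepr
  set a₁ : ∀ i : repr.ι, Coalgebra.Repr R (repr.left i) (H × H) :=
    fun i => Coalgebra.Repr.arbitrary R (repr.left i) with ha₁
  set a₂ : ∀ i : repr.ι, Coalgebra.Repr R (repr.right i) (H × H) :=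
    fun i => Coalgebra.Repr.arbitrary R (repr.right i) with ha₂
  have key := Coalgebra.sum_map_tmul_tmul_eq f k m x (repr := repr) (a₁ := a₁) (a₂ := a₂)
  have := congrArg (LinearMap.mul' R R ∘ₗ (LinearMap.mul' R R).lTensor R) key
  simp only [map_sum, LinearMap.comp_apply, LinearMap.lTensor_tmul,
    LinearMap.mul'_apply] at this
  calc conv (conv f k) m x
      = ∑ i ∈ repr.index, conv f k (repr.left i) * m (repr.right i) :=
        conv_repr _ _ x repr
    _ = ∑ i ∈ repr.index, (∑ j ∈ (a₁ i).index,
          f ((a₁ i).left j) * k ((a₁ i).right j)) * m (repr.right i) := by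
        refine Finset.sum_congr rfl fun i _ => ?_
        rw [conv_repr f k _ (a₁ i)]
    _ = ∑ i ∈ repr.index, ∑ j ∈ (a₁ i).index,
          f ((a₁ i).left j) * (k ((a₁ i).right j) * m (repr.right i)) := by
        refine Finset.sum_congr rfl fun i _ => ?_
        rw [Finset.sum_mul]
        exact Finset.sum_congr rfl fun j _ => by ring
    _ = ∑ i ∈ repr.index, ∑ j ∈ (a₂ i).index,
          f (repr.left i) * (k ((a₂ i).left j) * m ((a₂ i).right j)) := this.symm
    _ = ∑ i ∈ repr.index, f (repr.left i) * conv k m (repr.right i) := by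
        refine Finset.sum_congr rfl fun i _ => ?_
        rw [conv_repr k m _ (a₂ i), Finset.mul_sum]
    _ = conv f (conv k m) x := (conv_repr _ _ x repr).symm

lemma conv_apply_skew (f k : H →ₗ[R] R) (g g' h : H)
    (hh : Coalgebra.comul (R := R) h = g ⊗ₜ[R] h + h ⊗ₜ[R] g') :
    conv f k h = f g * k h + f h * k g' := by
  simp only [conv, LinearMap.comp_apply, hh, map_add, TensorProduct.map_tmul,
    LinearMap.mul'_apply]

end aux

/-- For a finite group `Φ` of weights and skew-primitive `h` with
`Δ h = g ⊗ h + h ⊗ g'`, if `γ g = 1` for all `γ ∈ Φ` and some `lam ∈ Φ` has `lam g' ≠ 1`,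
then `(1 - lam (g * g')) * Σ_Φ(h) = |Φ| * lam h`. -/
theorem sumPi_skewPrimitive_one_grouplike_in_GPi
    {R H : Type*} [CommRing R] [IsDomain R] [Ring H] [HopfAlgebra R H]
    (Φ : Finset (H →ₐ[R] R))
    (hone : Bialgebra.counitAlgHom R H ∈ Φ)
    (hmul : ∀ γ ∈ Φ, ∀ ν ∈ Φ, ∃ μ ∈ Φ,
      conv γ.toLinearMap ν.toLinearMap = μ.toLinearMap)
    (hinv : ∀ γ ∈ Φ, ∃ ν ∈ Φ,
      conv γ.toLinearMap ν.toLinearMap = (Bialgebra.counitAlgHom R H).toLinearMap)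
    (g g' h : H)
    (hg : Coalgebra.comul (R := R) g = g ⊗ₜ[R] g) (hgε : Coalgebra.counit (R := R) g = 1)
    (hg' : Coalgebra.comul (R := R) g' = g' ⊗ₜ[R] g') (hg'ε : Coalgebra.counit (R := R) g' = 1)
    (hh : Coalgebra.comul (R := R) h = g ⊗ₜ[R] h + h ⊗ₜ[R] g')
    (hGPi : ∀ γ ∈ Φ, γ g = 1)
    (lam : H →ₐ[R] R) (hlam : lam ∈ Φ) (h2 : lam g' ≠ 1) :
    (1 - lam (g * g')) * (∑ γ ∈ Φ, γ h) = (Φ.card : R) * lam h := by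
  -- right multiplication by `lam` is injective, thanks to a right inverse of `lam`
  obtain ⟨ν', hν'Φ, hν'⟩ := hinv lam hlam
  have cancel : ∀ γ ν : H →ₐ[R] R,
      conv γ.toLinearMap lam.toLinearMap = conv ν.toLinearMap lam.toLinearMap → γ = ν := by
    intro γ ν hcv
    apply AlgHom.toLinearMap_injective
    calc γ.toLinearMap
        = conv γ.toLinearMap (Bialgebra.counitAlgHom R H).toLinearMap :=
          (conv_counit_right _).symm
      _ = conv γ.toLinearMap (conv lam.toLinearMap ν'.toLinearMap) := by rw [hν']
      _ = conv (conv γ.toLinearMap lam.toLinearMap) ν'.toLinearMap := (conv_assoc _ _ _).symm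
      _ = conv (conv ν.toLinearMap lam.toLinearMap) ν'.toLinearMap := by rw [hcv]
      _ = conv ν.toLinearMap (conv lam.toLinearMap ν'.toLinearMap) := conv_assoc _ _ _
      _ = conv ν.toLinearMap (Bialgebra.counitAlgHom R H).toLinearMap := by rw [hν']
      _ = ν.toLinearMap := conv_counit_right _
  -- choose the product γ ⋆ lam inside Φ
  have hch : ∀ γ ∈ Φ, ∃ μ ∈ Φ, conv γ.toLinearMap lam.toLinearMap = μ.toLinearMap :=
    fun γ hγ => hmul γ hγ lam hlam
  -- the reindexed sum
  have hsum : ∑ γ ∈ Φ, conv γ.toLinearMap lam.toLinearMap h = ∑ γ ∈ Φ, γ h := by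
    refine Finset.sum_bij (fun γ hγ => (hch γ hγ).choose) ?_ ?_ ?_ ?_
    · intro γ hγ; exact (hch γ hγ).choose_spec.1
    · intro γ₁ hγ₁ γ₂ hγ₂ heq
      have heq' : (hch γ₁ hγ₁).choose = (hch γ₂ hγ₂).choose := heq
      apply cancel
      rw [(hch γ₁ hγ₁).choose_spec.2, (hch γ₂ hγ₂).choose_spec.2, heq']
    · intro μ hμ
      have hsurj := Finset.surj_on_of_inj_on_of_card_le (s := Φ) (t := Φ)
        (fun γ hγ => (hch γ hγ).choose) (fun γ hγ => (hch γ hγ).choose_spec.1)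
        (fun γ₁ γ₂ hγ₁ hγ₂ heq => by
          have heq' : (hch γ₁ hγ₁).choose = (hch γ₂ hγ₂).choose := heq
          apply cancel
          rw [(hch γ₁ hγ₁).choose_spec.2, (hch γ₂ hγ₂).choose_spec.2, heq']) le_rfl
      obtain ⟨γ, hγ, hγμ⟩ := hsurj μ hμ
      exact ⟨γ, hγ, hγμ.symm⟩
    · intro γ hγ
      have := LinearMap.congr_fun (hch γ hγ).choose_spec.2 h
      simpa using this
  -- compute each term of the left-hand side
  have hterm : ∀ γ ∈ Φ, conv γ.toLinearMap lam.toLinearMap h = lam h + lam g' * γ h := by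
    intro γ hγ
    rw [conv_apply_skew γ.toLinearMap lam.toLinearMap g g' h hh]
    have : γ g = 1 := hGPi γ hγ
    simp only [AlgHom.toLinearMap_apply, this, one_mul]
    ring
  have hS : ∑ γ ∈ Φ, conv γ.toLinearMap lam.toLinearMap h
      = (Φ.card : R) * lam h + lam g' * ∑ γ ∈ Φ, γ h := by
    rw [Finset.sum_congr rfl hterm, Finset.sum_add_distrib, ← Finset.mul_sum,
      Finset.sum_const, nsmul_eq_mul]
  have hgg' : lam (g * g') = lam g' := by
    rw [map_mul, hGPi lam hlam, one_mul]
  have key := hsum.symm.trans hS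
  rw [hgg', sub_mul, one_mul]
  linear_combination key
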